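/- The sequence defined by ρ*_0 = (σe^{-a}-1)/(σ-1) and ρ*_k = (e^{-a}/((σ-1)ρ*_0 + 1 - e^{-a})) (σ (a^k/k!) ρ*_0 + Σ_{l=1}^{k-1} (a^{k-l}/(k-l)!) ρ*_l) for k ≥ 1 coincides with the sequence given by the explicit formula ρ*_k = (σe^{-a}-1)(a^k/k!) Σ_{i≥1} i^k/σ^i. -/

import Mathlib

open Real

noncomputable def Sq (σ : ℝ) (k : ℕ) : ℝ := ∑' i : ℕ, ((i + 1 : ℕ) : ℝ) ^ k / σ ^ (i + 1)

lemma Sq_summable {σ : ℝ} (hσ : 1 < σ) (k : ℕ) :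
    Summable (fun i : ℕ => ((i + 1 : ℕ) : ℝ) ^ k / σ ^ (i + 1)) := by
  have h : Summable (fun n : ℕ => (n : ℝ) ^ k * σ⁻¹ ^ n) := by
    apply summable_pow_mul_geometric_of_norm_lt_one
    rw [norm_inv, Real.norm_of_nonneg (by linarith)]
    rw [inv_lt_one_iff₀]; right; exact hσ
  have h2 := (summable_nat_add_iff 1).2 h
  apply h2.congr
  intro i; push_cast; rw [div_eq_mul_inv, inv_pow]

lemma Sq_zero {σ : ℝ} (hσ : 1 < σ) : Sq σ 0 = (σ - 1)⁻¹ := by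
  have h1 : Sq σ 0 = ∑' i : ℕ, σ⁻¹ ^ (i + 1) := by
    unfold Sq; congr 1; ext i; simp [inv_pow]
  have hlt : σ⁻¹ < 1 := by
    rw [inv_lt_one_iff₀]; right; exact hσ
  have hnn : (0:ℝ) ≤ σ⁻¹ := by positivity
  rw [h1]
  have := tsum_geometric_of_lt_one hnn hlt
  calc ∑' i : ℕ, σ⁻¹ ^ (i + 1) = σ⁻¹ * ∑' i : ℕ, σ⁻¹ ^ i := by
        rw [← tsum_mul_left]; congr 1; ext i; rw [pow_succ]; ring
    _ = (σ - 1)⁻¹ := by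
        rw [this]; field_simp

lemma Sq_key {σ : ℝ} (hσ : 1 < σ) (k : ℕ) :
    σ * Sq σ k = 1 + ∑ l ∈ Finset.range (k + 1), (k.choose l : ℝ) * Sq σ l := by
  have hσ0 : σ ≠ 0 := by positivity
  have h1 : σ * Sq σ k = ∑' i : ℕ, ((i + 1 : ℕ) : ℝ) ^ k / σ ^ i := by
    rw [Sq, ← tsum_mul_left]
    congr 1; ext i
    rw [pow_succ]
    field_simp
  have hg : Summable (fun i : ℕ => ((i + 1 : ℕ) : ℝ) ^ k / σ ^ i) := by
    apply ((Sq_summable hσ k).mul_left σ).congr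
    intro i; rw [pow_succ]; field_simp
  rw [h1, Summable.tsum_eq_zero_add hg]
  have hf0 : ((0 + 1 : ℕ) : ℝ) ^ k / σ ^ 0 = 1 := by norm_num
  rw [hf0]
  congr 1
  have hexp : ∀ i : ℕ, ((i + 1 + 1 : ℕ) : ℝ) ^ k / σ ^ (i + 1)
      = ∑ l ∈ Finset.range (k + 1), (k.choose l : ℝ) * (((i + 1 : ℕ) : ℝ) ^ l / σ ^ (i + 1)) := by
    intro i
    have : ((i + 1 + 1 : ℕ) : ℝ) ^ k = (((i + 1 : ℕ) : ℝ) + 1) ^ k := by push_cast; ring_nf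
    rw [this, add_pow]
    rw [Finset.sum_div]
    congr 1; ext l
    simp; ring
  calc (∑' i : ℕ, ((i + 1 + 1 : ℕ) : ℝ) ^ k / σ ^ (i + 1))
      = ∑' i : ℕ, ∑ l ∈ Finset.range (k + 1), (k.choose l : ℝ) * (((i + 1 : ℕ) : ℝ) ^ l / σ ^ (i + 1)) := by
        congr 1; ext i; exact hexp i
    _ = ∑ l ∈ Finset.range (k + 1), ∑' i : ℕ, (k.choose l : ℝ) * (((i + 1 : ℕ) : ℝ) ^ l / σ ^ (i + 1)) := by
        apply Summable.tsum_finsetSum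
        intro l _
        exact (Sq_summable hσ l).mul_left _
    _ = ∑ l ∈ Finset.range (k + 1), (k.choose l : ℝ) * Sq σ l := by
        congr 1; ext l; rw [tsum_mul_left]; rfl

/-- The explicit formula: `ρ*_k = (σ e^{-a} - 1) (a^k/k!) ∑_{i≥1} i^k/σ^i`. -/
noncomputable def quasiRho (σ a : ℝ) (k : ℕ) : ℝ :=
  (σ * Real.exp (-a) - 1) * (a ^ k / (Nat.factorial k : ℝ)) *
    ∑' i : ℕ, ((i + 1 : ℕ) : ℝ) ^ k / σ ^ (i + 1)

lemma quasiRho_eq (σ a : ℝ) (k : ℕ) :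
    quasiRho σ a k = (σ * Real.exp (-a) - 1) * (a ^ k / (Nat.factorial k : ℝ)) * Sq σ k := rfl

lemma key2 {σ : ℝ} (hσ : 1 < σ) (k : ℕ) (hk : 1 ≤ k) :
    (σ - 1) * Sq σ k = σ * (σ - 1)⁻¹ + ∑ l ∈ Finset.Icc 1 (k - 1), (k.choose l : ℝ) * Sq σ l := by
  have hkey := Sq_key hσ k
  have hσ1 : σ - 1 ≠ 0 := by linarith
  have hsplit : ∑ l ∈ Finset.range (k + 1), (k.choose l : ℝ) * Sq σ l
      = (k.choose 0 : ℝ) * Sq σ 0 + (∑ l ∈ Finset.Icc 1 (k - 1), (k.choose l : ℝ) * Sq σ l)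
        + (k.choose k : ℝ) * Sq σ k := by
    rw [Finset.sum_range_succ]
    congr 1
    rw [Finset.range_eq_Ico, ← Finset.sum_Ico_consecutive _ (Nat.zero_le 1) hk]
    have e1 : Finset.Ico 0 1 = {0} := rfl
    have e2 : Finset.Icc 1 (k - 1) = Finset.Ico 1 k := by
      ext x; simp [Finset.mem_Icc, Finset.mem_Ico]; omega
    rw [e1, e2, Finset.sum_singleton]
  rw [hsplit] at hkey
  simp only [Nat.choose_zero_right, Nat.choose_self, Nat.cast_one, one_mul] at hkey
  rw [Sq_zero hσ] at hkey
  have : σ * (σ - 1)⁻¹ = 1 + (σ - 1)⁻¹ := by field_simp; ring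
  rw [this]
  linarith

lemma quasiRho_step (σ a : ℝ) (hσ : 1 < σ) (k : ℕ) (hk : 1 ≤ k) :
    quasiRho σ a k = (σ - 1)⁻¹ *
      (σ * (a ^ k / (Nat.factorial k : ℝ)) * ((σ * Real.exp (-a) - 1) / (σ - 1)) +
        ∑ l ∈ Finset.Icc 1 (k - 1),
          (a ^ (k - l) / (Nat.factorial (k - l) : ℝ)) * quasiRho σ a l) := by
  have hσ1 : σ - 1 ≠ 0 := by linarith
  set C := σ * Real.exp (-a) - 1 with hC
  have hterm : ∀ l ∈ Finset.Icc 1 (k - 1),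
      (a ^ (k - l) / (Nat.factorial (k - l) : ℝ)) * quasiRho σ a l
        = C * (a ^ k / (Nat.factorial k : ℝ)) * ((k.choose l : ℝ) * Sq σ l) := by
    intro l hl
    have hlk : l ≤ k := by
      have := (Finset.mem_Icc.mp hl).2; omega
    rw [quasiRho_eq]
    have hfac : ((k.choose l : ℝ)) * (Nat.factorial l : ℝ) * (Nat.factorial (k - l) : ℝ)
        = (Nat.factorial k : ℝ) := by
      exact_mod_cast Nat.choose_mul_factorial_mul_factorial hlk
    have hpow : a ^ k = a ^ (k - l) * a ^ l := by
      rw [← pow_add, Nat.sub_add_cancel hlk]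
    have f1 : (Nat.factorial l : ℝ) ≠ 0 := Nat.cast_ne_zero.mpr (Nat.factorial_ne_zero l)
    have f2 : (Nat.factorial (k - l) : ℝ) ≠ 0 := Nat.cast_ne_zero.mpr (Nat.factorial_ne_zero _)
    have f4 : (k.choose l : ℝ) ≠ 0 := Nat.cast_ne_zero.mpr (Nat.choose_pos hlk).ne'
    rw [hpow, ← hfac]
    field_simp
    ring
  rw [Finset.sum_congr rfl hterm, ← Finset.mul_sum, quasiRho_eq]
  have hkey := key2 hσ k hk
  set T := Sq σ k
  set Sg := ∑ l ∈ Finset.Icc 1 (k - 1), (k.choose l : ℝ) * Sq σ l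
  have hT : T = (σ - 1)⁻¹ * (σ * (σ - 1)⁻¹ + Sg) := by
    rw [← hkey]; field_simp
  rw [hT]; ring

/-- Any sequence satisfying the recurrence
`ρ*_0 = (σe^{-a}-1)/(σ-1)`,
`ρ*_k = (e^{-a}/((σ-1)ρ*_0 + 1 - e^{-a})) (σ (a^k/k!) ρ*_0 + ∑_{l=1}^{k-1} (a^{k-l}/(k-l)!) ρ*_l)`
for `k ≥ 1`, coincides with the sequence given by the explicit formula
`ρ*_k = (σe^{-a}-1)(a^k/k!) ∑_{i≥1} i^k/σ^i`. -/
theorem recurrence_eq_explicit (σ a : ℝ) (hσ : 1 < σ) (ha : 0 < a)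
    (h : 1 < σ * Real.exp (-a)) (r : ℕ → ℝ)
    (h0 : r 0 = (σ * Real.exp (-a) - 1) / (σ - 1))
    (hrec : ∀ k : ℕ, 1 ≤ k →
      r k = (Real.exp (-a) / ((σ - 1) * r 0 + 1 - Real.exp (-a))) *
        (σ * (a ^ k / (Nat.factorial k : ℝ)) * r 0 +
          ∑ l ∈ Finset.Icc 1 (k - 1),
            (a ^ (k - l) / (Nat.factorial (k - l) : ℝ)) * r l)) :
    ∀ k : ℕ, r k = quasiRho σ a k := by
  have hσ1 : σ - 1 ≠ 0 := by linarith
  intro k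
  induction k using Nat.strong_induction_on with
  | _ k ih =>
    cases k with
    | zero =>
      rw [h0, quasiRho_eq, Sq_zero hσ]
      simp [div_eq_mul_inv]
    | succ n =>
      have hk1 : 1 ≤ n + 1 := by omega
      rw [hrec (n + 1) hk1, h0]
      have hden : (σ - 1) * ((σ * Real.exp (-a) - 1) / (σ - 1)) + 1 - Real.exp (-a)
          = (σ - 1) * Real.exp (-a) := by
        field_simp; ring
      rw [hden]
      have hfac : Real.exp (-a) / ((σ - 1) * Real.exp (-a)) = (σ - 1)⁻¹ := by
        rw [div_eq_iff (mul_ne_zero hσ1 (Real.exp_ne_zero _))]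
        field_simp
      rw [hfac]
      have hsum : ∑ l ∈ Finset.Icc 1 (n + 1 - 1),
            (a ^ (n + 1 - l) / (Nat.factorial (n + 1 - l) : ℝ)) * r l
          = ∑ l ∈ Finset.Icc 1 (n + 1 - 1),
            (a ^ (n + 1 - l) / (Nat.factorial (n + 1 - l) : ℝ)) * quasiRho σ a l := by
        apply Finset.sum_congr rfl
        intro l hl
        rw [ih l (by have := (Finset.mem_Icc.mp hl).2; omega)]
      rw [hsum, ← quasiRho_step σ a hσ (n + 1) hk1]
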